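/- Let s(x,y) = y - y² + x² on ℝ². For every point (a,b) with s(a,b) = 0 and b < 1, and every tangent vector ξ = (ξ₁, ξ₂) satisfying 2aξ₁ + (1-2b)ξ₂ = 0, one has H_s(ξ,ξ)(a,b) = 2(ξ₁² - ξ₂²) ≥ 0. However, s is not convex in any neighborhood of the origin: for every ε > 0 there is a point p with ‖p‖ < ε and a direction ξ with H_s(ξ,ξ)(p) < 0. -/

import Mathlib

open RealInnerProductSpace Metric Bornology

noncomputable abbrev E (n : ℕ) := EuclideanSpace ℝ (Fin n)

/-- The real Hessian bilinear form `H_f(ξ,ζ)(x)` of a function `f` at `x`. -/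
noncomputable def Hess {F : Type*} [NormedAddCommGroup F] [NormedSpace ℝ F]
    (f : F → ℝ) (x ξ ζ : F) : ℝ :=
  fderiv ℝ (fun y => fderiv ℝ f y ζ) x ξ

noncomputable def s : E 2 → ℝ := fun p => p 1 - (p 1) ^ 2 + (p 0) ^ 2

noncomputable def P (i : Fin 2) : E 2 →L[ℝ] ℝ := EuclideanSpace.proj i

lemma hasFDerivAt_P (i : Fin 2) (y : E 2) :
    HasFDerivAt (fun p : E 2 => p i) (P i) y :=
  (P i).hasFDerivAt

lemma hasFDerivAt_s (y : E 2) :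
    HasFDerivAt s ((P 1 - (y 1 • P 1 + y 1 • P 1)) + (y 0 • P 0 + y 0 • P 0)) y := by
  have heq : s = fun p : E 2 => p 1 - p 1 * p 1 + p 0 * p 0 := by
    funext p; simp [s]; ring
  rw [heq]
  exact ((hasFDerivAt_P 1 y).sub ((hasFDerivAt_P 1 y).mul (hasFDerivAt_P 1 y))).add
    ((hasFDerivAt_P 0 y).mul (hasFDerivAt_P 0 y))

lemma fderiv_s (y ζ : E 2) : fderiv ℝ s y ζ = ζ 1 - 2 * y 1 * ζ 1 + 2 * y 0 * ζ 0 := by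
  rw [(hasFDerivAt_s y).fderiv]
  simp [P]
  ring

lemma hess_s (x ξ ζ : E 2) : Hess s x ξ ζ = 2 * ξ 0 * ζ 0 - 2 * ξ 1 * ζ 1 := by
  unfold Hess
  have hfun : (fun y : E 2 => fderiv ℝ s y ζ)
      = fun y : E 2 => ζ 1 - 2 * y 1 * ζ 1 + 2 * y 0 * ζ 0 := by
    funext y; exact fderiv_s y ζ
  rw [hfun]
  have hA : HasFDerivAt (fun y : E 2 => 2 * y 1 * ζ 1) ((2 * ζ 1) • P 1) x := by
    have := ((hasFDerivAt_P 1 x).const_mul (2 : ℝ)).mul_const (ζ 1)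
    refine this.congr_fderiv ?_
    ext v
    simp [P]
    ring
  have hB : HasFDerivAt (fun y : E 2 => 2 * y 0 * ζ 0) ((2 * ζ 0) • P 0) x := by
    have := ((hasFDerivAt_P 0 x).const_mul (2 : ℝ)).mul_const (ζ 0)
    refine this.congr_fderiv ?_
    ext v
    simp [P]
    ring
  have h : HasFDerivAt (fun y : E 2 => ζ 1 - 2 * y 1 * ζ 1 + 2 * y 0 * ζ 0)
      ((0 : E 2 →L[ℝ] ℝ) - ((2 * ζ 1) • P 1) + ((2 * ζ 0) • P 0)) x :=
    ((hasFDerivAt_const (ζ 1) x).sub hA).add hB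
  rw [h.fderiv]
  simp [P]
  ring

theorem example_nonconvex_defining_function :
    (∀ p : E 2, s p = 0 → p 1 < 1 →
      ∀ ξ : E 2, 2 * p 0 * ξ 0 + (1 - 2 * p 1) * ξ 1 = 0 →
        Hess s p ξ ξ = 2 * ((ξ 0) ^ 2 - (ξ 1) ^ 2) ∧ 0 ≤ Hess s p ξ ξ) ∧
    (∀ ε > (0:ℝ), ∃ p : E 2, ‖p‖ < ε ∧ ∃ ξ : E 2, Hess s p ξ ξ < 0) := by
  constructor
  · intro p hs hb ξ htan
    have hH := hess_s p ξ ξ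
    have hs' : p 1 - (p 1) ^ 2 + (p 0) ^ 2 = 0 := hs
    have a2 : (p 0) ^ 2 = (p 1) ^ 2 - p 1 := by linarith
    have hsq : (2 * p 0 * ξ 0) ^ 2 = ((1 - 2 * p 1) * ξ 1) ^ 2 := by
      have h : 2 * p 0 * ξ 0 = -((1 - 2 * p 1) * ξ 1) := by linarith
      rw [h]; ring
    have key : (ξ 1) ^ 2 = (4 * (p 1) ^ 2 - 4 * p 1) * ((ξ 0) ^ 2 - (ξ 1) ^ 2) := by
      linear_combination 4 * (ξ 0) ^ 2 * a2 - hsq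
    constructor
    · rw [hH]; ring
    · rw [hH]
      nlinarith [key, sq_nonneg (ξ 1), sq_nonneg (ξ 0), sq_nonneg (p 0), a2]
  · intro ε hε
    refine ⟨0, by simpa using hε, EuclideanSpace.single 1 1, ?_⟩
    rw [hess_s]
    simp
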